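/- The alternating group A_21 is not uniformly semi-rational: for every integer r there exist x ∈ A_21 and a generator y of the cyclic subgroup generated by x such that y is conjugate in A_21 neither to x nor to x^r. -/

import Mathlib

set_option maxRecDepth 8000

open Equiv Equiv.Perm

/-! Permutation definitions -/

def pc (L : List (List (Fin 21))) : Perm (Fin 21) := (L.map List.formPerm).prod

def l21 : List (Fin 21) := [0,1,2,3,4,5,6,7,8,9,10,11,12,13,14,15,16,17,18,19,20]
def l9 : List (Fin 21) := [0,1,2,3,4,5,6,7,8]
def l11 : List (Fin 21) := [9,10,11,12,13,14,15,16,17,18,19]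
def m3 : List (Fin 21) := [0,1,2]
def m7 : List (Fin 21) := [3,4,5,6,7,8,9]
def m11 : List (Fin 21) := [10,11,12,13,14,15,16,17,18,19,20]

def x1 : Perm (Fin 21) := pc [l21]
def x2 : Perm (Fin 21) := pc [l9, l11]
def x3 : Perm (Fin 21) := pc [m3, m7, m11]

def t1k : Perm (Fin 21) := pc [[1,2,4,8,16,11],[3,6,12],[5,10,20,19,17,13],[7,14],[9,18,15]]
def s1 : Perm (Fin 21) := pc [[1,5,4,20,16,17],[2,10,8,19,11,13],[3,15,12,18,6,9],[7,14]]
def t2k : Perm (Fin 21) := pc [[1,2,4,8,7,5],[3,6],[10,11,13,17,14,19,18,16,12,15]]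
def s2 : Perm (Fin 21) := pc [[1,5,7,8,4,2],[3,6],[10,14,12,13,18],[11,19,15,17,16]]
def t3k : Perm (Fin 21) := pc [[1,2],[4,6,5,9,7,8],[11,16,13,17,19,20,15,18,14,12]]
def s3a : Perm (Fin 21) := pc [[1,2],[4,5,7],[6,9,8],[11,12,14,18,15,20,19,17,13,16]]
def s3b : Perm (Fin 21) := pc [[1,2],[4,8,7,9,5,6],[11,15,13,14,19],[12,20,16,18,17]]
def x1p2 : Perm (Fin 21) := pc [[0,2,4,6,8,10,12,14,16,18,20,1,3,5,7,9,11,13,15,17,19]]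
def x2p2 : Perm (Fin 21) := pc [[0,2,4,6,8,1,3,5,7],[9,11,13,15,17,19,10,12,14,16,18]]
def x3p2 : Perm (Fin 21) := pc [[0,2,1],[3,5,7,9,4,6,8],[10,12,14,16,18,20,11,13,15,17,19]]
def x3p4 : Perm (Fin 21) := pc [[0,1,2],[3,7,4,8,5,9,6],[10,14,18,11,15,19,12,16,20,13,17]]
def x3p8 : Perm (Fin 21) := pc [[0,2,1],[3,4,5,6,7,8,9],[10,18,15,12,20,17,14,11,19,16,13]]
def x3p16 : Perm (Fin 21) := pc [[0,1,2],[3,5,7,9,4,6,8],[10,15,20,14,19,13,18,12,17,11,16]]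

/-! Generic helpers about formPerm cycles -/

lemma pc_cons (l : List (Fin 21)) (L : List (List (Fin 21))) :
    pc (l :: L) = l.formPerm * pc L := by simp [pc]
lemma pc_single (l : List (Fin 21)) : pc [l] = l.formPerm := by simp [pc]

lemma isCyc (l : List (Fin 21)) (h1 : l.Nodup) (h2 : 2 ≤ l.length) : IsCycle l.formPerm :=
  List.isCycle_formPerm h1 h2

lemma suppFP (l : List (Fin 21)) (h1 : l.Nodup) (h2 : 2 ≤ l.length) :
    l.formPerm.support = l.toFinset := by
  refine List.support_formPerm_of_nodup l h1 (fun x h => ?_)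
  have := congrArg List.length h
  simp only [List.length_singleton] at this
  omega

lemma ordFP (l : List (Fin 21)) (h1 : l.Nodup) (h2 : 2 ≤ l.length) :
    orderOf l.formPerm = l.length := by
  rw [(isCyc l h1 h2).orderOf, suppFP l h1 h2, List.card_toFinset, List.dedup_eq_self.mpr h1]

lemma signFP (l : List (Fin 21)) (h1 : l.Nodup) (h2 : 2 ≤ l.length) :
    sign l.formPerm = -(-1 : ℤˣ) ^ l.length := by
  rw [(isCyc l h1 h2).sign, suppFP l h1 h2, List.card_toFinset, List.dedup_eq_self.mpr h1]

lemma sign_pc (L : List (List (Fin 21))) (h : ∀ l ∈ L, l.Nodup ∧ 2 ≤ l.length) :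
    sign (pc L) = (L.map (fun l => -(-1 : ℤˣ) ^ l.length)).prod := by
  induction L with
  | nil => simp [pc]
  | cons a t ih =>
      rw [pc_cons, map_mul, ih (fun l hl => h l (List.mem_cons_of_mem a hl)),
        signFP a (h a List.mem_cons_self).1 (h a List.mem_cons_self).2]
      simp

lemma zpowers_sign_one {c g : Perm (Fin 21)} (hg : g ∈ Subgroup.zpowers c)
    (hc : sign c = 1) : sign g = 1 := by
  obtain ⟨j, rfl⟩ := Subgroup.mem_zpowers_iff.mp hg
  rw [map_zpow, hc, one_zpow]

lemma subcycle_part {c g : Perm (Fin 21)} (hc : IsCycle c) (hsc : sign c = 1)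
    (hcomm : Commute g c) :
    ∃ A : Perm (Fin 21), sign A = 1 ∧ (∀ a, a ∈ c.support ↔ g a ∈ c.support) ∧
      (∀ a ∈ c.support, A a = g a) ∧ (∀ a ∉ c.support, A a = a) := by
  rw [hc.commute_iff] at hcomm
  obtain ⟨h', hmem⟩ := hcomm
  exact ⟨_, zpowers_sign_one hmem hsc, fun a => (h' a).symm,
    fun a ha => ofSubtype_subtypePerm_of_mem h' ha,
    fun a ha => ofSubtype_apply_of_not_mem _ ha⟩

/-! Centralizers consist of even permutations -/

lemma hcent1 : ∀ g : Perm (Fin 21), g * x1 = x1 * g → sign g = 1 := by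
  intro g hg
  have hcyc : IsCycle x1 := by rw [x1, pc_single]; exact isCyc _ (by decide) (by decide)
  have hsupp : x1.support = Finset.univ := by
    rw [x1, pc_single, suppFP _ (by decide) (by decide)]; decide
  have hs : sign x1 = 1 := by rw [x1, sign_pc _ (by decide)]; decide
  obtain ⟨A, hA1, _, hmem, _⟩ := subcycle_part hcyc hs hg
  have hgA : g = A := by
    ext a
    exact congrArg Fin.val (hmem a (by rw [hsupp]; exact Finset.mem_univ a)).symm
  rw [hgA, hA1]

lemma hcent2 : ∀ g : Perm (Fin 21), g * x2 = x2 * g → sign g = 1 := by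
  intro g hg
  have hgc : Commute g x2 := hg
  have hx2 : x2 = l9.formPerm * l11.formPerm := by simp [x2, pc]
  have hdisj : Equiv.Perm.Disjoint l9.formPerm l11.formPerm := by
    rw [Equiv.Perm.disjoint_iff_eq_or_eq]; decide
  have hcom : Commute l9.formPerm l11.formPerm := hdisj.commute
  have ho9 : orderOf l9.formPerm = 9 := by rw [ordFP _ (by decide) (by decide)]; rfl
  have ho11 : orderOf l11.formPerm = 11 := by rw [ordFP _ (by decide) (by decide)]; rfl
  have hs9 : sign l9.formPerm = 1 := by rw [signFP _ (by decide) (by decide)]; decide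
  have hs11 : sign l11.formPerm = 1 := by rw [signFP _ (by decide) (by decide)]; decide
  have h119 : x2 ^ 11 = l9.formPerm ^ 11 := by
    rw [hx2, hcom.mul_pow, ← ho11, pow_orderOf_eq_one, mul_one]
  have h911 : x2 ^ 9 = l11.formPerm ^ 9 := by
    rw [hx2, hcom.mul_pow, ← ho9, pow_orderOf_eq_one, one_mul]
  have hcop9 : Nat.Coprime 11 (orderOf l9.formPerm) := by rw [ho9]; norm_num
  have hcop11 : Nat.Coprime 9 (orderOf l11.formPerm) := by rw [ho11]; norm_num
  have hc9cyc : IsCycle (x2 ^ 11) := by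
    rw [h119]; exact ((isCyc _ (by decide) (by decide)).pow_iff).mpr hcop9
  have hc11cyc : IsCycle (x2 ^ 9) := by
    rw [h911]; exact ((isCyc _ (by decide) (by decide)).pow_iff).mpr hcop11
  have hsupp9 : (x2 ^ 11).support = l9.toFinset := by
    rw [h119, support_pow_coprime hcop9, suppFP _ (by decide) (by decide)]
  have hsupp11 : (x2 ^ 9).support = l11.toFinset := by
    rw [h911, support_pow_coprime hcop11, suppFP _ (by decide) (by decide)]
  have hsgn9 : sign (x2 ^ 11) = 1 := by rw [h119, map_pow, hs9, one_pow]
  have hsgn11 : sign (x2 ^ 9) = 1 := by rw [h911, map_pow, hs11, one_pow]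
  obtain ⟨A9, hA9s, hA9iff, hA9mem, hA9not⟩ :=
    subcycle_part hc9cyc hsgn9 (hgc.pow_right 11)
  obtain ⟨A11, hA11s, hA11iff, hA11mem, hA11not⟩ :=
    subcycle_part hc11cyc hsgn11 (hgc.pow_right 9)
  have hdd : ∀ (a : Fin 21), a ∈ l9.toFinset → a ∉ l11.toFinset := by decide
  have hdd' : ∀ (a : Fin 21), a ∈ l11.toFinset → a ∉ l9.toFinset := by decide
  have hout : ∀ (a : Fin 21), a ∉ l9.toFinset → a ∉ l11.toFinset → x2 a = a := by decide
  have hfix : ∀ b, x2 b = b → b = 20 := by decide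
  have hg20 : g 20 = 20 := by
    refine hfix _ ?_
    have h1 : g (x2 20) = x2 (g 20) := by
      rw [← Equiv.Perm.mul_apply, ← Equiv.Perm.mul_apply, hg]
    have h2 : x2 20 = 20 := by decide
    rw [h2] at h1
    exact h1.symm
  have hgA : g = A9 * A11 := by
    ext a
    rw [Equiv.Perm.mul_apply]
    by_cases h9 : a ∈ (x2 ^ 11).support
    · have ha9 : a ∈ l9.toFinset := by rwa [hsupp9] at h9
      have h11 : a ∉ (x2 ^ 9).support := by rw [hsupp11]; exact hdd a ha9
      rw [hA11not a h11, hA9mem a h9]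
    · by_cases h11 : a ∈ (x2 ^ 9).support
      · rw [hA11mem a h11]
        have hga : g a ∈ (x2 ^ 9).support := (hA11iff a).mp h11
        have hga' : g a ∉ (x2 ^ 11).support := by
          rw [hsupp9]; exact hdd' _ (by rwa [hsupp11] at hga)
        rw [hA9not _ hga']
      · rw [hA11not a h11, hA9not a h9]
        have ha : x2 a = a := by
          refine hout a ?_ ?_
          · rwa [hsupp9] at h9
          · rwa [hsupp11] at h11
        have : a = 20 := hfix a ha
        rw [this, hg20]
  rw [hgA, map_mul, hA9s, hA11s, one_mul]

lemma hcent3 : ∀ g : Perm (Fin 21), g * x3 = x3 * g → sign g = 1 := by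
  intro g hg
  have hgc : Commute g x3 := hg
  have hx3 : x3 = m3.formPerm * (m7.formPerm * m11.formPerm) := by simp [x3, pc, mul_assoc]
  have hd37 : Equiv.Perm.Disjoint m3.formPerm m7.formPerm := by
    rw [Equiv.Perm.disjoint_iff_eq_or_eq]; decide
  have hd311 : Equiv.Perm.Disjoint m3.formPerm m11.formPerm := by
    rw [Equiv.Perm.disjoint_iff_eq_or_eq]; decide
  have hd711 : Equiv.Perm.Disjoint m7.formPerm m11.formPerm := by
    rw [Equiv.Perm.disjoint_iff_eq_or_eq]; decide
  have ho3 : orderOf m3.formPerm = 3 := by rw [ordFP _ (by decide) (by decide)]; rfl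
  have ho7 : orderOf m7.formPerm = 7 := by rw [ordFP _ (by decide) (by decide)]; rfl
  have ho11 : orderOf m11.formPerm = 11 := by rw [ordFP _ (by decide) (by decide)]; rfl
  have hs3 : sign m3.formPerm = 1 := by rw [signFP _ (by decide) (by decide)]; decide
  have hs7 : sign m7.formPerm = 1 := by rw [signFP _ (by decide) (by decide)]; decide
  have hs11 : sign m11.formPerm = 1 := by rw [signFP _ (by decide) (by decide)]; decide
  have pow_eq : ∀ n : ℕ, x3 ^ n = m3.formPerm ^ n * (m7.formPerm ^ n * m11.formPerm ^ n) := by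
    intro n
    rw [hx3, (Commute.mul_right hd37.commute hd311.commute).mul_pow, hd711.commute.mul_pow]
  have z7 : m7.formPerm ^ 77 = 1 := by
    rw [show (77 : ℕ) = 7 * 11 by norm_num, pow_mul, ← ho7, pow_orderOf_eq_one, one_pow]
  have z11 : m11.formPerm ^ 77 = 1 := by
    rw [show (77 : ℕ) = 11 * 7 by norm_num, pow_mul, ← ho11, pow_orderOf_eq_one, one_pow]
  have z3 : m3.formPerm ^ 33 = 1 := by
    rw [show (33 : ℕ) = 3 * 11 by norm_num, pow_mul, ← ho3, pow_orderOf_eq_one, one_pow]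
  have z11b : m11.formPerm ^ 33 = 1 := by
    rw [show (33 : ℕ) = 11 * 3 by norm_num, pow_mul, ← ho11, pow_orderOf_eq_one, one_pow]
  have z3b : m3.formPerm ^ 21 = 1 := by
    have h : m3.formPerm ^ (3 * 7) = 1 := by rw [pow_mul, ← ho3, pow_orderOf_eq_one, one_pow]
    simpa using h
  have z7b : m7.formPerm ^ 21 = 1 := by
    have h : m7.formPerm ^ (7 * 3) = 1 := by rw [pow_mul, ← ho7, pow_orderOf_eq_one, one_pow]
    simpa using h
  have e3 : x3 ^ 77 = m3.formPerm ^ 77 := by rw [pow_eq, z7, z11, one_mul, mul_one]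
  have e7 : x3 ^ 33 = m7.formPerm ^ 33 := by rw [pow_eq, z3, z11b, mul_one, one_mul]
  have e11 : x3 ^ 21 = m11.formPerm ^ 21 := by rw [pow_eq, z3b, z7b, one_mul, one_mul]
  have hcop3 : Nat.Coprime 77 (orderOf m3.formPerm) := by rw [ho3]; norm_num
  have hcop7 : Nat.Coprime 33 (orderOf m7.formPerm) := by rw [ho7]; norm_num
  have hcop11 : Nat.Coprime 21 (orderOf m11.formPerm) := by rw [ho11]; norm_num
  have hcyc3 : IsCycle (x3 ^ 77) := by
    rw [e3]; exact ((isCyc _ (by decide) (by decide)).pow_iff).mpr hcop3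
  have hcyc7 : IsCycle (x3 ^ 33) := by
    rw [e7]; exact ((isCyc _ (by decide) (by decide)).pow_iff).mpr hcop7
  have hcyc11 : IsCycle (x3 ^ 21) := by
    rw [e11]; exact ((isCyc _ (by decide) (by decide)).pow_iff).mpr hcop11
  have hsupp3 : (x3 ^ 77).support = m3.toFinset := by
    rw [e3, support_pow_coprime hcop3, suppFP _ (by decide) (by decide)]
  have hsupp7 : (x3 ^ 33).support = m7.toFinset := by
    rw [e7, support_pow_coprime hcop7, suppFP _ (by decide) (by decide)]
  have hsupp11 : (x3 ^ 21).support = m11.toFinset := by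
    rw [e11, support_pow_coprime hcop11, suppFP _ (by decide) (by decide)]
  have hsgn3 : sign (x3 ^ 77) = 1 := by rw [e3, map_pow, hs3, one_pow]
  have hsgn7 : sign (x3 ^ 33) = 1 := by rw [e7, map_pow, hs7, one_pow]
  have hsgn11 : sign (x3 ^ 21) = 1 := by rw [e11, map_pow, hs11, one_pow]
  obtain ⟨A3, hA3s, hA3iff, hA3mem, hA3not⟩ := subcycle_part hcyc3 hsgn3 (hgc.pow_right 77)
  obtain ⟨A7, hA7s, hA7iff, hA7mem, hA7not⟩ := subcycle_part hcyc7 hsgn7 (hgc.pow_right 33)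
  obtain ⟨A11, hA11s, hA11iff, hA11mem, hA11not⟩ := subcycle_part hcyc11 hsgn11 (hgc.pow_right 21)
  have h37 : ∀ (a : Fin 21), a ∈ m3.toFinset → a ∉ m7.toFinset := by decide
  have h311 : ∀ (a : Fin 21), a ∈ m3.toFinset → a ∉ m11.toFinset := by decide
  have h73 : ∀ (a : Fin 21), a ∈ m7.toFinset → a ∉ m3.toFinset := by decide
  have h711 : ∀ (a : Fin 21), a ∈ m7.toFinset → a ∉ m11.toFinset := by decide
  have h113 : ∀ (a : Fin 21), a ∈ m11.toFinset → a ∉ m3.toFinset := by decide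
  have h117 : ∀ (a : Fin 21), a ∈ m11.toFinset → a ∉ m7.toFinset := by decide
  have hcover : ∀ (a : Fin 21), a ∈ m3.toFinset ∨ a ∈ m7.toFinset ∨ a ∈ m11.toFinset := by decide
  have hgA : g = A3 * (A7 * A11) := by
    ext a
    rw [Equiv.Perm.mul_apply, Equiv.Perm.mul_apply]
    rcases hcover a with h | h | h
    · rw [hA11not a (by rw [hsupp11]; exact h311 a h),
        hA7not a (by rw [hsupp7]; exact h37 a h),
        hA3mem a (by rwa [hsupp3])]
    · rw [hA11not a (by rw [hsupp11]; exact h711 a h),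
        hA7mem a (by rwa [hsupp7])]
      have hga : g a ∈ m7.toFinset := by
        have := (hA7iff a).mp (by rwa [hsupp7])
        rwa [hsupp7] at this
      rw [hA3not _ (by rw [hsupp3]; exact h73 _ hga)]
    · rw [hA11mem a (by rwa [hsupp11])]
      have hga : g a ∈ m11.toFinset := by
        have := (hA11iff a).mp (by rwa [hsupp11])
        rwa [hsupp11] at this
      rw [hA7not _ (by rw [hsupp7]; exact h117 _ hga),
        hA3not _ (by rw [hsupp3]; exact h113 _ hga)]
  rw [hgA, map_mul, map_mul, hA3s, hA7s, hA11s, one_mul, one_mul]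

/-! Concrete computational facts -/

lemma hx1p2 : x1p2 = x1 * x1 := by decide
lemma hx2p2 : x2p2 = x2 * x2 := by decide
lemma hx3p2 : x3p2 = x3 * x3 := by decide
lemma hx3p4 : x3p4 = x3p2 * x3p2 := by decide
lemma hx3p8 : x3p8 = x3p4 * x3p4 := by decide
lemma hx3p16 : x3p16 = x3p8 * x3p8 := by decide

lemma ht1k_raw : t1k * x1 = (x1 * x1) * t1k := by decide
lemma hs1_raw : s1 * x1 = ((x1p2 * x1p2) * x1) * s1 := by decide
lemma ht2k_raw : t2k * x2 = (x2 * x2) * t2k := by decide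
lemma hs2_raw : s2 * x2 = ((x2p2 * x2p2) * x2) * s2 := by decide
lemma ht3k_raw : t3k * x3 = (x3p16 * x3) * t3k := by decide
lemma hs3a_raw : s3a * x3 = (x3 * x3) * s3a := by decide
lemma hs3b_raw : s3b * x3 = ((x3p4 * x3) * s3b) := by decide

lemma hx1p2' : x1p2 = x1 ^ 2 := by rw [hx1p2, ← sq]
lemma hx2p2' : x2p2 = x2 ^ 2 := by rw [hx2p2, ← sq]
lemma hx3p2' : x3p2 = x3 ^ 2 := by rw [hx3p2, ← sq]
lemma hx3p4' : x3p4 = x3 ^ 4 := by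
  rw [hx3p4, hx3p2', ← sq, ← pow_mul]
lemma hx3p8' : x3p8 = x3 ^ 8 := by
  rw [hx3p8, hx3p4', ← sq, ← pow_mul]
lemma hx3p16' : x3p16 = x3 ^ 16 := by
  rw [hx3p16, hx3p8', ← sq, ← pow_mul]

lemma ht1k : t1k * x1 = x1 ^ 2 * t1k := by rw [ht1k_raw, ← sq]
lemma ht2k : t2k * x2 = x2 ^ 2 * t2k := by rw [ht2k_raw, ← sq]
lemma hs3a : s3a * x3 = x3 ^ 2 * s3a := by rw [hs3a_raw, ← sq]
lemma hs1 : s1 * x1 = x1 ^ 5 * s1 := by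
  rw [hs1_raw, hx1p2']
  simp only [← sq]
  rw [← pow_mul, ← pow_succ]
lemma hs2 : s2 * x2 = x2 ^ 5 * s2 := by
  rw [hs2_raw, hx2p2']
  simp only [← sq]
  rw [← pow_mul, ← pow_succ]
lemma hs3b : s3b * x3 = x3 ^ 5 * s3b := by
  rw [hs3b_raw, hx3p4', ← pow_succ]
lemma ht3k : t3k * x3 = x3 ^ 17 * t3k := by
  rw [ht3k_raw, hx3p16', ← pow_succ]

lemma sign_x1 : sign x1 = 1 := by rw [x1, sign_pc _ (by decide)]; decide
lemma sign_x2 : sign x2 = 1 := by rw [x2, sign_pc _ (by decide)]; decide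
lemma sign_x3 : sign x3 = 1 := by rw [x3, sign_pc _ (by decide)]; decide
lemma sign_t1k : sign t1k = -1 := by rw [t1k, sign_pc _ (by decide)]; decide
lemma sign_s1 : sign s1 = 1 := by rw [s1, sign_pc _ (by decide)]; decide
lemma sign_t2k : sign t2k = -1 := by rw [t2k, sign_pc _ (by decide)]; decide
lemma sign_s2 : sign s2 = 1 := by rw [s2, sign_pc _ (by decide)]; decide
lemma sign_t3k : sign t3k = -1 := by rw [t3k, sign_pc _ (by decide)]; decide
lemma sign_s3a : sign s3a = 1 := by rw [s3a, sign_pc _ (by decide)]; decide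
lemma sign_s3b : sign s3b = 1 := by rw [s3b, sign_pc _ (by decide)]; decide

lemma ho1 : orderOf x1 = 21 := by
  rw [x1, pc_single, ordFP _ (by decide) (by decide)]; rfl
lemma ho2 : orderOf x2 = 99 := by
  have hx2 : x2 = l9.formPerm * l11.formPerm := by simp [x2, pc]
  have hdisj : Equiv.Perm.Disjoint l9.formPerm l11.formPerm := by
    rw [Equiv.Perm.disjoint_iff_eq_or_eq]; decide
  rw [hx2, hdisj.orderOf, ordFP _ (by decide) (by decide), ordFP _ (by decide) (by decide)]
  rfl
lemma ho3x : orderOf x3 = 231 := by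
  have hx3 : x3 = m3.formPerm * (m7.formPerm * m11.formPerm) := by simp [x3, pc, mul_assoc]
  have hd37 : Equiv.Perm.Disjoint m3.formPerm m7.formPerm := by
    rw [Equiv.Perm.disjoint_iff_eq_or_eq]; decide
  have hd311 : Equiv.Perm.Disjoint m3.formPerm m11.formPerm := by
    rw [Equiv.Perm.disjoint_iff_eq_or_eq]; decide
  have hd711 : Equiv.Perm.Disjoint m7.formPerm m11.formPerm := by
    rw [Equiv.Perm.disjoint_iff_eq_or_eq]; decide
  rw [hx3, (hd37.mul_right hd311).orderOf, hd711.orderOf,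
    ordFP _ (by decide) (by decide), ordFP _ (by decide) (by decide),
    ordFP _ (by decide) (by decide)]
  rfl

/-! Abstract machinery -/

lemma semiconj_inv {τ a b : Perm (Fin 21)} (h : τ * a = b * τ) : τ⁻¹ * b = a * τ⁻¹ := by
  rw [inv_mul_eq_iff_eq_mul, ← mul_assoc, h, mul_inv_cancel_right]

/-- Even-conjugator relation: there is an even permutation conjugating `x` to `x ^ e`. -/
def Wev (x : Perm (Fin 21)) (e : ℕ) : Prop :=
  ∃ τ : Perm (Fin 21), sign τ = 1 ∧ τ * x = x ^ e * τ

lemma Wev.one (x : Perm (Fin 21)) : Wev x 1 := ⟨1, by simp, by simp⟩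

lemma Wev.mul {x : Perm (Fin 21)} {a b : ℕ} (ha : Wev x a) (hb : Wev x b) :
    Wev x (a * b) := by
  obtain ⟨τ, hτs, hτ⟩ := ha
  obtain ⟨σ, hσs, hσ⟩ := hb
  refine ⟨σ * τ, by rw [map_mul, hτs, hσs, one_mul], ?_⟩
  have h2 : σ * x ^ a = (x ^ b) ^ a * σ := SemiconjBy.pow_right hσ a
  calc σ * τ * x = σ * (x ^ a * τ) := by rw [mul_assoc, hτ]
    _ = ((x ^ b) ^ a) * (σ * τ) := by rw [← mul_assoc, h2, mul_assoc]
    _ = x ^ (a * b) * (σ * τ) := by rw [← pow_mul, Nat.mul_comm b a]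

lemma Wev.pow {x : Perm (Fin 21)} {a : ℕ} (ha : Wev x a) : ∀ j : ℕ, Wev x (a ^ j)
  | 0 => by rw [pow_zero]; exact Wev.one x
  | (j + 1) => by rw [pow_succ]; exact (Wev.pow ha j).mul ha

lemma Wev.congr {x : Perm (Fin 21)} {a b : ℕ} (ha : Wev x a) (h : x ^ a = x ^ b) :
    Wev x b := by
  obtain ⟨τ, hτs, hτ⟩ := ha
  exact ⟨τ, hτs, by rw [← h]; exact hτ⟩

/-- Key: no even permutation conjugates `x ^ k` to `z`, given an odd one does. -/
lemma core (x z τ : Perm (Fin 21)) (k u : ℕ)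
    (hcent : ∀ g : Perm (Fin 21), g * x = x * g → sign g = 1)
    (hku : x ^ (k * u) = x)
    (hτ : τ * x ^ k = z * τ) (hτs : sign τ = -1) :
    ∀ σ : Perm (Fin 21), sign σ = 1 → σ * x ^ k ≠ z * σ := by
  intro σ hσs hσ
  have ht' : τ⁻¹ * z = x ^ k * τ⁻¹ := semiconj_inv hτ
  have h1 : (τ⁻¹ * σ) * x ^ k = x ^ k * (τ⁻¹ * σ) := by
    calc τ⁻¹ * σ * x ^ k = τ⁻¹ * (z * σ) := by rw [mul_assoc, hσ]
      _ = (τ⁻¹ * z) * σ := by rw [mul_assoc]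
      _ = x ^ k * (τ⁻¹ * σ) := by rw [ht', mul_assoc]
  have h2 : (τ⁻¹ * σ) * x = x * (τ⁻¹ * σ) := by
    have hc : Commute (τ⁻¹ * σ) (x ^ k) := h1
    have h3 := hc.pow_right u
    rw [← pow_mul, hku] at h3
    exact h3
  have h4 := hcent _ h2
  rw [map_mul, map_inv, hτs, hσs, mul_one] at h4
  norm_num at h4

lemma core_ord (x z : Perm (Fin 21)) (k t : ℕ) (hne : x ^ (k * t) ≠ 1) (hz : z ^ t = 1) :
    ∀ σ : Perm (Fin 21), σ * x ^ k = z * σ → False := by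
  intro σ h
  have h2 : σ * x ^ (k * t) = z ^ t * σ := by
    rw [pow_mul]; exact SemiconjBy.pow_right h t
  rw [hz, one_mul] at h2
  exact hne (mul_left_cancel (a := σ) (by rw [h2, mul_one]))

/-- Packaging: transfer everything into the alternating group. -/
lemma finisher (x : Perm (Fin 21)) (hx : sign x = 1) (k u : ℕ) (hku : x ^ (k * u) = x) (r : ℤ)
    (h1 : ∀ σ : Perm (Fin 21), sign σ = 1 → σ * x ^ k ≠ x * σ)
    (h2 : ∀ σ : Perm (Fin 21), sign σ = 1 → σ * x ^ k ≠ x ^ r * σ) :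
    ∃ X Y : alternatingGroup (Fin 21), Subgroup.zpowers Y = Subgroup.zpowers X ∧
      ¬ IsConj Y X ∧ ¬ IsConj Y (X ^ r) := by
  have hxmem : x ∈ alternatingGroup (Fin 21) := mem_alternatingGroup.mpr hx
  refine ⟨⟨x, hxmem⟩, ⟨x, hxmem⟩ ^ k, ?_, ?_, ?_⟩
  · apply le_antisymm
    · rw [Subgroup.zpowers_le]
      exact Subgroup.npow_mem_zpowers _ k
    · rw [Subgroup.zpowers_le]
      have hXku : (⟨x, hxmem⟩ : alternatingGroup (Fin 21)) ^ (k * u) = ⟨x, hxmem⟩ :=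
        Subtype.ext (by rw [SubmonoidClass.coe_pow]; exact hku)
      have hmem2 := Subgroup.npow_mem_zpowers ((⟨x, hxmem⟩ : alternatingGroup (Fin 21)) ^ k) u
      rwa [← pow_mul, hXku] at hmem2
  · intro hconj
    obtain ⟨c, hc⟩ := isConj_iff.mp hconj
    have hc' : (c : Perm (Fin 21)) * x ^ k = x * c := by
      have h := congrArg Subtype.val (mul_inv_eq_iff_eq_mul.mp hc)
      simpa [Subgroup.coe_mul, SubmonoidClass.coe_pow] using h
    exact h1 c (mem_alternatingGroup.mp c.2) hc'
  · intro hconj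
    obtain ⟨c, hc⟩ := isConj_iff.mp hconj
    have hc' : (c : Perm (Fin 21)) * x ^ k = x ^ r * c := by
      have h := congrArg Subtype.val (mul_inv_eq_iff_eq_mul.mp hc)
      simpa [Subgroup.coe_mul, SubmonoidClass.coe_pow, SubgroupClass.coe_zpow] using h
    exact h2 c (mem_alternatingGroup.mp c.2) hc'

lemma zpow_red (x : Perm (Fin 21)) (hx : x ^ (693 : ℕ) = 1) (r : ℤ) :
    x ^ r = x ^ ((r % 693).toNat) := by
  have h0 : (0 : ℤ) ≤ r % 693 := Int.emod_nonneg r (by norm_num)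
  have hxz : x ^ (693 : ℤ) = 1 := by
    rw [show (693 : ℤ) = ((693 : ℕ) : ℤ) from rfl, zpow_natCast, hx]
  conv_lhs => rw [← Int.mul_ediv_add_emod r 693]
  rw [zpow_add, zpow_mul, hxz, one_zpow, one_mul, ← zpow_natCast x (r % 693).toNat, Int.toNat_of_nonneg h0]

/-! Arithmetic core: for every unit `m` mod 693 at least one of the three characters is `+1`,
witnessed by membership in the explicit kernel subgroups. -/
lemma arith : ∀ m : Fin 693, ¬(3 ∣ m.val) → ¬(7 ∣ m.val) → ¬(11 ∣ m.val) →
    (∃ j : Fin 6, 5 ^ j.val % 21 = m.val % 21) ∨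
    (∃ j : Fin 30, 5 ^ j.val % 99 = m.val % 99) ∨
    (∃ j : Fin 30, ∃ j' : Fin 2, (2 ^ j.val * 5 ^ j'.val) % 231 = m.val % 231) := by decide

/-- A case of the main theorem where `x ^ r` can be handled by order considerations. -/
lemma caseOrd (x : Perm (Fin 21)) (hx : sign x = 1)
    (hcent : ∀ g : Perm (Fin 21), g * x = x * g → sign g = 1)
    (k u t : ℕ) (hku : x ^ (k * u) = x)
    (tk : Perm (Fin 21)) (htk : tk * x = x ^ k * tk) (htks : sign tk = -1)
    (r : ℤ) (hne : x ^ (k * t) ≠ 1) (hz : (x ^ r) ^ t = 1) :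
    ∃ X Y : alternatingGroup (Fin 21), Subgroup.zpowers Y = Subgroup.zpowers X ∧
      ¬ IsConj Y X ∧ ¬ IsConj Y (X ^ r) := by
  refine finisher x hx k u hku r ?_ ?_
  · refine core x x tk⁻¹ k u hcent hku (semiconj_inv htk) ?_
    rw [map_inv, htks]; decide
  · exact fun σ _ h => core_ord x (x ^ r) k t hne hz σ h

/-- A case of the main theorem where `x ^ r` is a generator; uses an even conjugator to `x^m`. -/
lemma caseGen (x : Perm (Fin 21)) (hx : sign x = 1)
    (hcent : ∀ g : Perm (Fin 21), g * x = x * g → sign g = 1)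
    (k u : ℕ) (hku : x ^ (k * u) = x)
    (tk : Perm (Fin 21)) (htk : tk * x = x ^ k * tk) (htks : sign tk = -1)
    (r : ℤ) (m : ℕ) (hrm : x ^ r = x ^ m) (hw : Wev x m) :
    ∃ X Y : alternatingGroup (Fin 21), Subgroup.zpowers Y = Subgroup.zpowers X ∧
      ¬ IsConj Y X ∧ ¬ IsConj Y (X ^ r) := by
  obtain ⟨τe, hτes, hτe⟩ := hw
  refine finisher x hx k u hku r ?_ ?_
  · refine core x x tk⁻¹ k u hcent hku (semiconj_inv htk) ?_
    rw [map_inv, htks]; decide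
  · rw [hrm]
    refine core x (x ^ m) (τe * tk⁻¹) k u hcent hku ?_ ?_
    · have htk' : tk⁻¹ * x ^ k = x * tk⁻¹ := semiconj_inv htk
      calc (τe * tk⁻¹) * x ^ k = τe * (x * tk⁻¹) := by rw [mul_assoc, htk']
        _ = (x ^ m) * (τe * tk⁻¹) := by rw [← mul_assoc, hτe, mul_assoc]
    · rw [map_mul, map_inv, hτes, htks, one_mul]; decide

/-! Power facts -/

lemma h21 : x1 ^ (21 : ℕ) = 1 := by have h := pow_orderOf_eq_one x1; rwa [ho1] at h
lemma h99 : x2 ^ (99 : ℕ) = 1 := by have h := pow_orderOf_eq_one x2; rwa [ho2] at h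
lemma h231 : x3 ^ (231 : ℕ) = 1 := by have h := pow_orderOf_eq_one x3; rwa [ho3x] at h

lemma h693_1 : x1 ^ (693 : ℕ) = 1 := by
  rw [show (693 : ℕ) = 21 * 33 from rfl, pow_mul, h21, one_pow]
lemma h693_2 : x2 ^ (693 : ℕ) = 1 := by
  rw [show (693 : ℕ) = 99 * 7 from rfl, pow_mul, h99, one_pow]
lemma h693_3 : x3 ^ (693 : ℕ) = 1 := by
  rw [show (693 : ℕ) = 231 * 3 from rfl, pow_mul, h231, one_pow]

lemma hku1 : x1 ^ (2 * 11) = x1 := by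
  have h : x1 ^ 22 = x1 ^ 1 := pow_eq_pow_iff_modEq.mpr (by rw [ho1]; decide)
  simpa using h
lemma hku2 : x2 ^ (2 * 50) = x2 := by
  have h : x2 ^ 100 = x2 ^ 1 := pow_eq_pow_iff_modEq.mpr (by rw [ho2]; decide)
  simpa using h
lemma hku3 : x3 ^ (17 * 68) = x3 := by
  have h : x3 ^ 1156 = x3 ^ 1 := pow_eq_pow_iff_modEq.mpr (by rw [ho3x]; decide)
  simpa using h

lemma hne_of_not_dvd {x : Perm (Fin 21)} {n e : ℕ} (hord : orderOf x = n) (h : ¬ n ∣ e) :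
    x ^ e ≠ 1 := fun hh => h (hord ▸ orderOf_dvd_of_pow_eq_one hh)

/-! Main theorem -/

/-- A group `G` is `r`-semi-rational if every generator of the cyclic subgroup
generated by any `x ∈ G` is conjugate in `G` to `x` or to `x ^ r`. -/
def IsSemiRational (G : Type*) [Group G] (r : ℤ) : Prop :=
  ∀ x y : G, Subgroup.zpowers y = Subgroup.zpowers x → IsConj y x ∨ IsConj y (x ^ r)

theorem alternatingGroup_twentyone_not_uniformlySemiRational :
    ∀ r : ℤ, ∃ x y : alternatingGroup (Fin 21),
      Subgroup.zpowers y = Subgroup.zpowers x ∧ ¬ IsConj y x ∧ ¬ IsConj y (x ^ r) := by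
  intro r
  have w15 : Wev x1 5 := ⟨s1, sign_s1, hs1⟩
  have w25 : Wev x2 5 := ⟨s2, sign_s2, hs2⟩
  have w32 : Wev x3 2 := ⟨s3a, sign_s3a, hs3a⟩
  have w35 : Wev x3 5 := ⟨s3b, sign_s3b, hs3b⟩
  by_cases h3 : (3 : ℤ) ∣ r
  · -- use x1, order argument with t = 7
    obtain ⟨s, rfl⟩ := h3
    refine caseOrd x1 sign_x1 hcent1 2 11 7 hku1 t1k ht1k sign_t1k _ ?_ ?_
    · exact hne_of_not_dvd ho1 (by norm_num)
    · have h21z : x1 ^ (21 : ℤ) = 1 := by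
        rw [show (21 : ℤ) = ((21 : ℕ) : ℤ) from rfl, zpow_natCast, h21]
      rw [← zpow_natCast (x1 ^ ((3 : ℤ) * s)) 7, ← zpow_mul,
        show (3 : ℤ) * s * ((7 : ℕ) : ℤ) = 21 * s by push_cast; ring, zpow_mul, h21z, one_zpow]
  · by_cases h7 : (7 : ℤ) ∣ r
    · -- use x1, order argument with t = 3
      obtain ⟨s, rfl⟩ := h7
      refine caseOrd x1 sign_x1 hcent1 2 11 3 hku1 t1k ht1k sign_t1k _ ?_ ?_
      · exact hne_of_not_dvd ho1 (by norm_num)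
      · have h21z : x1 ^ (21 : ℤ) = 1 := by
          rw [show (21 : ℤ) = ((21 : ℕ) : ℤ) from rfl, zpow_natCast, h21]
        rw [← zpow_natCast (x1 ^ ((7 : ℤ) * s)) 3, ← zpow_mul,
          show (7 : ℤ) * s * ((3 : ℕ) : ℤ) = 21 * s by push_cast; ring, zpow_mul, h21z, one_zpow]
    · by_cases h11 : (11 : ℤ) ∣ r
      · -- use x2, order argument with t = 9
        obtain ⟨s, rfl⟩ := h11
        refine caseOrd x2 sign_x2 hcent2 2 50 9 hku2 t2k ht2k sign_t2k _ ?_ ?_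
        · exact hne_of_not_dvd ho2 (by norm_num)
        · have h99z : x2 ^ (99 : ℤ) = 1 := by
            rw [show (99 : ℤ) = ((99 : ℕ) : ℤ) from rfl, zpow_natCast, h99]
          rw [← zpow_natCast (x2 ^ ((11 : ℤ) * s)) 9, ← zpow_mul,
            show (11 : ℤ) * s * ((9 : ℕ) : ℤ) = 99 * s by push_cast; ring, zpow_mul, h99z, one_zpow]
      · -- r is coprime to 231; use the character argument
        set m : ℕ := (r % 693).toNat with hm_def
        have hm0 : (m : ℤ) = r % 693 := Int.toNat_of_nonneg (Int.emod_nonneg r (by norm_num))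
        have hmlt : m < 693 := by
          have := Int.emod_lt_of_pos r (show (0 : ℤ) < 693 by norm_num)
          omega
        have hdm3 : ¬ 3 ∣ m := by
          intro hd
          exact h3 (by omega)
        have hdm7 : ¬ 7 ∣ m := by
          intro hd
          exact h7 (by omega)
        have hdm11 : ¬ 11 ∣ m := by
          intro hd
          exact h11 (by omega)
        rcases arith ⟨m, hmlt⟩ hdm3 hdm7 hdm11 with ⟨j, hj⟩ | ⟨j, hj⟩ | ⟨j, j', hj⟩
        · refine caseGen x1 sign_x1 hcent1 2 11 hku1 t1k ht1k sign_t1k r m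
            (by rw [zpow_red x1 h693_1 r]) ?_
          exact (w15.pow j.val).congr (pow_eq_pow_iff_modEq.mpr (by rw [ho1]; exact hj))
        · refine caseGen x2 sign_x2 hcent2 2 50 hku2 t2k ht2k sign_t2k r m
            (by rw [zpow_red x2 h693_2 r]) ?_
          exact (w25.pow j.val).congr (pow_eq_pow_iff_modEq.mpr (by rw [ho2]; exact hj))
        · refine caseGen x3 sign_x3 hcent3 17 68 hku3 t3k ht3k sign_t3k r m
            (by rw [zpow_red x3 h693_3 r]) ?_
          exact ((w32.pow j.val).mul (w35.pow j'.val)).congr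
            (pow_eq_pow_iff_modEq.mpr (by rw [ho3x]; exact hj))
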